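/- Let n > t + r be positive integers, let i ∈ {1,…,r}, and let B ∼ Beta(n − t − i + 1, t). Then E[B^{−(n−t−r)}] ≤ n^t. -/

import Mathlib

open MeasureTheory ProbabilityTheory

noncomputable section

/-- The density of the Beta distribution with parameters `a, b > 0`. -/
def betaPDFReal (a b : ℝ) (x : ℝ) : ℝ :=
  if 0 < x ∧ x < 1 then
    Real.Gamma (a + b) / (Real.Gamma a * Real.Gamma b) * x ^ (a - 1) * (1 - x) ^ (b - 1)
  else 0

/-- The Beta distribution with parameters `a, b > 0`, as a measure on `ℝ`. -/
def betaMeasure (a b : ℝ) : Measure ℝ :=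
  volume.withDensity fun x => ENNReal.ofReal (_root_.betaPDFReal a b x)

end

private lemma nat_fact_ineq {n t i : ℕ} (h : t + i ≤ n) :
    (n - i).factorial ≤ n ^ t * (n - t - i).factorial := by
  have ht : t ≤ n - i := by omega
  have hfd := Nat.factorial_mul_descFactorial ht
  have hd : (n - i).descFactorial t ≤ n ^ t :=
    le_trans (Nat.descFactorial_le_pow _ _) (Nat.pow_le_pow_left (by omega) _)
  calc (n - i).factorial = (n - i - t).factorial * (n - i).descFactorial t := hfd.symm
    _ ≤ (n - i - t).factorial * n ^ t := Nat.mul_le_mul_left _ hd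
    _ = n ^ t * (n - t - i).factorial := by
        rw [show n - i - t = n - t - i from by omega, Nat.mul_comm]

/-- If `B ∼ Beta(n − t − i + 1, t)` with `1 ≤ i ≤ r` and `n > t + r`, then
`E[B^{−(n−t−r)}] ≤ n^t`. -/
theorem integral_inv_pow_betaMeasure_le
    {n t r i : ℕ} (hn : t + r < n) (hi1 : 1 ≤ i) (hir : i ≤ r) :
    ∫ x, (x ^ (n - t - r))⁻¹ ∂(_root_.betaMeasure ((n : ℝ) - t - i + 1) t)
      ≤ (n : ℝ) ^ t := by
  rcases Nat.eq_zero_or_pos t with ht0 | ht0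
  · subst ht0
    have hμ : _root_.betaMeasure ((n : ℝ) - (0:ℕ) - i + 1) ((0:ℕ):ℝ) = 0 := by
      rw [_root_.betaMeasure]
      have : (fun x : ℝ => ENNReal.ofReal (_root_.betaPDFReal ((n : ℝ) - (0:ℕ) - i + 1) ((0:ℕ):ℝ) x))
          = fun _ => 0 := by
        funext x
        simp [_root_.betaPDFReal, Real.Gamma_zero]
      rw [this]
      simp
    rw [hμ]
    simp
  · -- main case, t ≥ 1
    set m := n - t - r with hm
    set k := n - t - i with hk
    set p := t - 1 with hp
    have hkm : m ≤ k := by omega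
    have htn : t + i ≤ n := by omega
    set a : ℝ := (n : ℝ) - t - i + 1 with ha
    set C : ℝ := Real.Gamma (a + t) / (Real.Gamma a * Real.Gamma t) with hC
    -- cast lemmas
    have c1 : ((n - i : ℕ) : ℝ) = (n : ℝ) - i := by
      have h : n - i + i = n := by omega
      have h2 := congrArg (fun x : ℕ => (x : ℝ)) h
      push_cast at h2; linarith
    have c2 : ((k : ℕ) : ℝ) = (n : ℝ) - t - i := by
      have h : k + t + i = n := by omega
      have h2 := congrArg (fun x : ℕ => (x : ℝ)) h
      push_cast at h2; linarith
    have c3 : ((p : ℕ) : ℝ) = (t : ℝ) - 1 := by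
      have h : p + 1 = t := by omega
      have h2 := congrArg (fun x : ℕ => (x : ℝ)) h
      push_cast at h2; linarith
    -- Gamma values
    have gA : Real.Gamma a = (k.factorial : ℝ) := by
      rw [show a = (k : ℝ) + 1 by rw [ha]; linarith]
      exact Real.Gamma_nat_eq_factorial k
    have gB : Real.Gamma (t : ℝ) = (p.factorial : ℝ) := by
      rw [show (t : ℝ) = (p : ℝ) + 1 by linarith]
      exact Real.Gamma_nat_eq_factorial p
    have gAB : Real.Gamma (a + t) = ((n - i).factorial : ℝ) := by
      rw [show a + (t : ℝ) = ((n - i : ℕ) : ℝ) + 1 by rw [ha, c1]; ring]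
      exact Real.Gamma_nat_eq_factorial _
    have hC0 : 0 ≤ C := by rw [hC, gA, gB, gAB]; positivity
    -- rewrite the density as an indicator of a polynomial
    have hdens : ∀ x : ℝ, _root_.betaPDFReal a t x
        = Set.indicator (Set.Ioo (0:ℝ) 1) (fun x => C * x ^ k * (1 - x) ^ p) x := by
      intro x
      by_cases hx : 0 < x ∧ x < 1
      · rw [_root_.betaPDFReal, if_pos hx, Set.indicator_of_mem (Set.mem_Ioo.2 ⟨hx.1, hx.2⟩)]
        rw [show a - 1 = ((k : ℕ) : ℝ) by rw [ha]; linarith,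
          show (t : ℝ) - 1 = ((p : ℕ) : ℝ) from c3.symm,
          Real.rpow_natCast, Real.rpow_natCast, hC]
      · rw [_root_.betaPDFReal, if_neg hx,
          Set.indicator_of_notMem (by simpa [Set.mem_Ioo] using hx)]
    have hind0 : ∀ x : ℝ, 0 ≤ Set.indicator (Set.Ioo (0:ℝ) 1)
        (fun x => C * x ^ k * (1 - x) ^ p) x := by
      intro x
      apply Set.indicator_nonneg
      intro y hy
      have h1 : (0:ℝ) ≤ y := (Set.mem_Ioo.1 hy).1.le
      have h2 : (0:ℝ) ≤ 1 - y := by have := (Set.mem_Ioo.1 hy).2; linarith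
      exact mul_nonneg (mul_nonneg hC0 (pow_nonneg h1 k)) (pow_nonneg h2 p)
    have hmeasind : Measurable fun x : ℝ =>
        (Set.indicator (Set.Ioo (0:ℝ) 1) (fun x => C * x ^ k * (1 - x) ^ p) x).toNNReal := by
      have hcont : Measurable (fun x : ℝ => C * x ^ k * (1 - x) ^ p) := by fun_prop
      exact (hcont.indicator measurableSet_Ioo).real_toNNReal
    have hμ : _root_.betaMeasure a t = volume.withDensity fun x =>
        ((Set.indicator (Set.Ioo (0:ℝ) 1) (fun x => C * x ^ k * (1 - x) ^ p) x).toNNReal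
          : ENNReal) := by
      rw [_root_.betaMeasure]
      congr 1
      funext x
      rw [hdens x]
      rfl
    rw [hμ, integral_withDensity_eq_integral_smul hmeasind]
    have hfun2 : (fun x : ℝ =>
        (Set.indicator (Set.Ioo (0:ℝ) 1) (fun x => C * x ^ k * (1 - x) ^ p) x).toNNReal
          • (x ^ m)⁻¹)
        = fun x : ℝ => Set.indicator (Set.Ioo (0:ℝ) 1) (fun x => C * x ^ k * (1 - x) ^ p) x
            * (x ^ m)⁻¹ := by
      funext x
      rw [NNReal.smul_def, Real.coe_toNNReal _ (hind0 x), smul_eq_mul]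
    rw [hfun2]
    -- the dominating function
    set g : ℝ → ℝ := Set.indicator (Set.Ioo (0:ℝ) 1) (fun x => C * (1 - x) ^ p) with hg
    have hgint : Integrable g := by
      rw [hg]
      refine (integrable_indicator_iff measurableSet_Ioo).2 ?_
      exact ((continuous_const.mul ((continuous_const.sub continuous_id).pow p)
        ).integrableOn_Icc).mono_set Set.Ioo_subset_Icc_self
    have hf0 : 0 ≤ᵐ[volume] fun x : ℝ =>
        Set.indicator (Set.Ioo (0:ℝ) 1) (fun x => C * x ^ k * (1 - x) ^ p) x * (x ^ m)⁻¹ := by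
      refine Filter.Eventually.of_forall fun x => ?_
      dsimp only [Pi.zero_apply]
      by_cases hx : x ∈ Set.Ioo (0:ℝ) 1
      · exact mul_nonneg (hind0 x) (inv_nonneg.2 (pow_nonneg (Set.mem_Ioo.1 hx).1.le m))
      · rw [Set.indicator_of_notMem hx, zero_mul]
    have hle : (fun x : ℝ =>
        Set.indicator (Set.Ioo (0:ℝ) 1) (fun x => C * x ^ k * (1 - x) ^ p) x * (x ^ m)⁻¹)
        ≤ᵐ[volume] g := by
      refine Filter.Eventually.of_forall fun x => ?_
      dsimp only
      by_cases hx : x ∈ Set.Ioo (0:ℝ) 1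
      · rw [hg, Set.indicator_of_mem hx, Set.indicator_of_mem hx]
        obtain ⟨hx0, hx1⟩ := Set.mem_Ioo.1 hx
        have h1x : (0:ℝ) ≤ 1 - x := by linarith
        have h1 : x ^ k * (x ^ m)⁻¹ = x ^ (k - m) := by
          rw [pow_sub₀ x (ne_of_gt hx0) hkm]
        calc C * x ^ k * (1 - x) ^ p * (x ^ m)⁻¹
            = (C * (1 - x) ^ p) * (x ^ k * (x ^ m)⁻¹) := by ring
          _ = (C * (1 - x) ^ p) * x ^ (k - m) := by rw [h1]
          _ ≤ (C * (1 - x) ^ p) * 1 := by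
              refine mul_le_mul_of_nonneg_left (pow_le_one₀ hx0.le hx1.le) ?_
              exact mul_nonneg hC0 (pow_nonneg h1x p)
          _ = C * (1 - x) ^ p := mul_one _
      · rw [hg, Set.indicator_of_notMem hx, Set.indicator_of_notMem hx, zero_mul]
    refine le_trans (integral_mono_of_nonneg hf0 hgint hle) ?_
    -- compute ∫ g
    have hgval : ∫ x, g x = C * (1 / ((p : ℝ) + 1)) := by
      rw [hg, integral_indicator measurableSet_Ioo, ← integral_Ioc_eq_integral_Ioo,
        ← intervalIntegral.integral_of_le zero_le_one, intervalIntegral.integral_const_mul]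
      congr 1
      rw [intervalIntegral.integral_comp_sub_left (fun u => u ^ p) 1]
      norm_num [integral_pow]
    rw [hgval]
    -- final arithmetic
    have key : (n - i).factorial ≤ n ^ t * (k.factorial * t.factorial) := by
      calc (n - i).factorial ≤ n ^ t * k.factorial := by rw [hk]; exact nat_fact_ineq htn
        _ ≤ n ^ t * (k.factorial * t.factorial) :=
            Nat.mul_le_mul_left _ (Nat.le_mul_of_pos_right _ t.factorial_pos)
    have keyR : ((n - i).factorial : ℝ) ≤ (n : ℝ) ^ t * (k.factorial * t.factorial) := by
      exact_mod_cast key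
    have hpt : (p.factorial : ℝ) * ((p : ℝ) + 1) = t.factorial := by
      have h : p.factorial * (p + 1) = t.factorial := by
        rw [show t = p + 1 from by omega, Nat.factorial_succ]; ring
      exact_mod_cast h
    rw [hC, gA, gB, gAB, div_mul_div_comm, mul_one, mul_assoc, hpt,
      div_le_iff₀ (by positivity)]
    exact keyR
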